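/- Let v and u be words with |v| < |u| which are not powers of a common word, with v a suffix of u. Let s be the maximal common suffix of v^∞ and v^∞u (which is finite). Then s is a suffix of every left-infinite concatenation of u and v. -/
import Mathlib


/-- The `k`-fold concatenation of the word `v` with itself. -/
def wpow {A : Type*} (v : List A) (k : ℕ) : List A := (List.replicate k v).flatten

/-- `s` is a (finite) suffix of the left-infinite word `x`, where `x n` denotes the
letter of `x` at distance `n` from the right end (`x 0` is the last letter). -/
def LSuffix {A : Type*} (s : List A) (x : ℕ → A) : Prop :=
  ∀ i, i < s.length → s.reverse[i]? = some (x i)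

private lemma wpow_zero {A : Type*} (v : List A) : wpow v 0 = [] := by simp [wpow]

private lemma wpow_succ {A : Type*} (v : List A) (k : ℕ) : wpow v (k+1) = v ++ wpow v k := by
  simp [wpow, List.replicate_succ]

private lemma wpow_length {A : Type*} (v : List A) (k : ℕ) :
    (wpow v k).length = k * v.length := by
  induction k with
  | zero => simp [wpow_zero]
  | succ k ih => rw [wpow_succ]; simp [ih, Nat.succ_mul]; omega

private lemma wpow_rev_getElem? {A : Type*} (v : List A) (k i : ℕ) (h : i < k * v.length) :
    (wpow v k).reverse[i]? = v.reverse[i % v.length]? := by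
  induction k with
  | zero => simp at h
  | succ k ih =>
    rw [wpow_succ, List.reverse_append]
    by_cases hik : i < k * v.length
    · rw [List.getElem?_append_left (by simpa [wpow_length] using hik)]
      exact ih hik
    · push_neg at hik
      have hrl : (wpow v k).reverse.length = k * v.length := by simp [wpow_length]
      rw [List.getElem?_append_right (by omega)]
      rw [hrl]
      have hr : i - k * v.length < v.length := by
        rw [Nat.succ_mul] at h; omega
      have h2 : i = (i - k * v.length) + k * v.length := by omega
      have hmod : i % v.length = i - k * v.length := by
        conv_lhs => rw [h2]
        rw [Nat.add_mul_mod_self_right]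
        exact Nat.mod_eq_of_lt hr
      rw [hmod]

private lemma lsuffix_of_append {A : Type*} {a b : List A} {z : ℕ → A}
    (h : LSuffix (a ++ b) z) : LSuffix b z := by
  intro i hi
  have h1 := h i (by simp; omega)
  rwa [List.reverse_append, List.getElem?_append_left (by simpa using hi)] at h1

private lemma period_iter {A : Type*} (f : ℕ → A) (p : ℕ) (h : ∀ n, f (n + p) = f n) :
    ∀ t n, f (n + t * p) = f n := by
  intro t
  induction t with
  | zero => simp
  | succ t ih =>
    intro n
    have he : n + (t+1) * p = (n + t * p) + p := by ring
    rw [he, h, ih]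

private lemma period_mod {A : Type*} (f : ℕ → A) (d : ℕ) (h : ∀ n, f (n + d) = f n) (n : ℕ) :
    f n = f (n % d) := by
  conv_lhs => rw [← Nat.mod_add_div' n d]
  exact period_iter f d h (n / d) (n % d)

private lemma period_gcd {A : Type*} (f : ℕ → A) :
    ∀ p q, (∀ n, f (n + p) = f n) → (∀ n, f (n + q) = f n) →
    ∀ n, f (n + Nat.gcd p q) = f n := by
  intro p
  induction p using Nat.strong_induction_on with
  | _ p ih =>
    intro q hp hq n
    rcases Nat.eq_zero_or_pos p with h0 | h0
    · subst h0; simpa using hq n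
    · rw [Nat.gcd_rec]
      have hqp : ∀ m, f (m + q % p) = f m := by
        intro m
        have h1 : f (m + q % p + q / p * p) = f (m + q % p) := period_iter f p hp _ _
        have key : m + q % p + q / p * p = m + q := by
          rw [add_assoc, Nat.mod_add_div']
        rw [key] at h1
        rw [← h1, hq]
      exact ih (q % p) (Nat.mod_lt q h0) p hqp hp n

private lemma flat_succ {A : Type*} (c : ℕ → List A) (k : ℕ) :
    ((List.range (k+1)).map c).reverse.flatten
      = c k ++ ((List.range k).map c).reverse.flatten := by
  rw [List.range_succ]
  simp

private lemma flat_const {A : Type*} (c : ℕ → List A) (v : List A) (k : ℕ)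
    (h : ∀ i, i < k → c i = v) :
    ((List.range k).map c).reverse.flatten = wpow v k := by
  induction k with
  | zero => simp [wpow_zero]
  | succ k ih =>
    rw [flat_succ, ih (fun i hi => h i (by omega)), h k (by omega), ← wpow_succ]

/-- Let `|v| < |u|`, with `u` and `v` not powers of a common word and `v` a suffix
of `u`.  Let `s` be the maximal common suffix of `v^∞` and `v^∞u`.  Then `s` is a
suffix of every left-infinite concatenation of `u` and `v`. -/
theorem common_suffix_of_concatenations {A : Type*} (u v s : List A)
    (hv : v ≠ []) (hlen : v.length < u.length)
    (hsuf : v <:+ u)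
    (hnp : ¬ ∃ (w : List A) (t r : ℕ), 0 < t ∧ 0 < r ∧ u = wpow w t ∧ v = wpow w r)
    (x y : ℕ → A)
    -- `x` is the left-infinite word `v^∞`
    (hx : ∀ k : ℕ, LSuffix (wpow v k) x)
    -- `y` is the left-infinite word `v^∞ u`
    (hy : ∀ k : ℕ, LSuffix (wpow v k ++ u) y)
    -- `s` is the maximal common suffix of `x` and `y`
    (hsx : LSuffix s x) (hsy : LSuffix s y)
    (hmax : ∀ s' : List A, LSuffix s' x → LSuffix s' y → s'.length ≤ s.length)
    -- `z` is a left-infinite concatenation of `u` and `v`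
    (z : ℕ → A) (c : ℕ → List A) (hc : ∀ i, c i = u ∨ c i = v)
    (hz : ∀ k : ℕ, LSuffix (((List.range (k+1)).map c).reverse.flatten) z) :
    LSuffix s z := by
  classical
  have hv0 : 0 < v.length := List.length_pos_iff.mpr hv
  -- letters of x
  have hxl : ∀ n, v.reverse[n % v.length]? = some (x n) := by
    intro n
    have hnk : n < (n+1) * v.length := by
      have := Nat.le_mul_of_pos_right (n+1) hv0
      omega
    have h1 := hx (n+1) n (by rw [wpow_length]; exact hnk)
    rwa [wpow_rev_getElem? v (n+1) n hnk] at h1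
  -- x has period v.length
  have hxper : ∀ n, x (n + v.length) = x n := by
    intro n
    have h1 := hxl n
    have h2 := hxl (n + v.length)
    rw [Nat.add_mod_right, h1] at h2
    exact (Option.some.inj h2).symm
  have x_mul : ∀ t n, x (n + t * v.length) = x n := period_iter x v.length hxper
  have x_mod : ∀ n, x n = x (n % v.length) := period_mod x v.length hxper
  -- letters of y
  have hyu : ∀ i, i < u.length → u.reverse[i]? = some (y i) := by
    have h0 := hy 0
    rw [wpow_zero, List.nil_append] at h0
    exact h0
  have hyvu : ∀ i, i < v.length + u.length → (v ++ u).reverse[i]? = some (y i) := by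
    have h1 := hy 1
    have hw1 : wpow v 1 = v := by simp [wpow]
    rw [hw1] at h1
    intro i hi
    exact h1 i (by simpa using hi)
  have hyhi : ∀ i, u.length ≤ i → y i = x (i - u.length) := by
    intro i hi
    have hik : i < (i+1) * v.length + u.length := by
      have := Nat.le_mul_of_pos_right (i+1) hv0
      omega
    have h1 := hy (i+1) i (by simp [wpow_length]; omega)
    rw [List.reverse_append, List.getElem?_append_right (by simpa using hi),
      List.length_reverse] at h1
    rw [wpow_rev_getElem? v (i+1) (i - u.length) (by
      have := Nat.le_mul_of_pos_right (i+1) hv0; omega)] at h1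
    have h2 := hxl (i - u.length)
    rw [h2] at h1
    exact (Option.some.inj h1).symm
  -- x and y agree below s.length
  have agree : ∀ i, i < s.length → x i = y i := by
    intro i hi
    have h1 := hsx i hi
    have h2 := hsy i hi
    rw [h1] at h2
    exact Option.some.inj h2
  -- key bound: s.length < u.length + v.length
  have hsb : s.length < u.length + v.length := by
    by_contra hcon
    push_neg at hcon
    have hagree : ∀ i, i < u.length + v.length → x i = y i :=
      fun i hi => agree i (lt_of_lt_of_le hi hcon)
    -- x has period u.length
    have hpu : ∀ n, x (n + u.length) = x n := by
      have hsmall : ∀ j, j < v.length → x (j + u.length) = x j := by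
        intro j hj
        have h1 : x (j + u.length) = y (j + u.length) := hagree _ (by omega)
        have h2 : y (j + u.length) = x j := by
          rw [hyhi _ (by omega)]
          congr 1
          omega
        rw [h1, h2]
      intro n
      calc x (n + u.length) = x ((n + u.length) % v.length) := x_mod _
        _ = x ((n % v.length + u.length) % v.length) := by rw [Nat.mod_add_mod]
        _ = x (n % v.length + u.length) := (x_mod _).symm
        _ = x (n % v.length) := hsmall _ (Nat.mod_lt _ hv0)
        _ = x n := (x_mod n).symm
    set d := Nat.gcd u.length v.length with hd
    have hdu : d ∣ u.length := Nat.gcd_dvd_left _ _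
    have hdv : d ∣ v.length := Nat.gcd_dvd_right _ _
    have hd0 : 0 < d := Nat.gcd_pos_of_pos_right _ hv0
    have hpd : ∀ n, x (n + d) = x n := period_gcd x u.length v.length hpu hxper
    have hxd : ∀ n, x n = x (n % d) := period_mod x d hpd
    set w : List A := (List.ofFn (fun j : Fin d => x j)).reverse with hw
    have hwlen : w.length = d := by simp [hw]
    have hwrev : ∀ j, j < d → w.reverse[j]? = some (x j) := by
      intro j hj
      rw [hw, List.reverse_reverse, List.getElem?_ofFn]
      simp [List.ofFnNthVal, hj]
    have key : ∀ (L : List A) (r : ℕ), L.length = r * d →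
        (∀ i, i < L.length → L.reverse[i]? = some (x i)) → L = wpow w r := by
      intro L r hLr hL
      have hlen2 : (wpow w r).length = r * d := by rw [wpow_length, hwlen]
      apply List.reverse_injective
      apply List.ext_getElem?
      intro i
      by_cases hi : i < L.length
      · rw [hL i hi, hxd i, wpow_rev_getElem? w r i (by rw [hwlen]; omega), hwlen,
          hwrev (i % d) (Nat.mod_lt _ hd0)]
      · rw [List.getElem?_eq_none (by simp; omega),
          List.getElem?_eq_none (by simp; omega)]
    have hveq : v = wpow w (v.length / d) := by
      apply key v _ (Nat.div_mul_cancel hdv).symm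
      intro i hi
      have := hxl i
      rwa [Nat.mod_eq_of_lt hi] at this
    have hueq : u = wpow w (u.length / d) := by
      apply key u _ (Nat.div_mul_cancel hdu).symm
      intro i hi
      have h1 := hyu i hi
      rw [← hagree i (by omega)] at h1
      exact h1
    exact hnp ⟨w, u.length / d, v.length / d,
      Nat.div_pos (Nat.le_of_dvd (by omega) hdu) hd0,
      Nat.div_pos (Nat.le_of_dvd hv0 hdv) hd0, hueq, hveq⟩
  -- main case split on the blocks of z
  by_cases hall : ∀ i, c i = v
  · intro i hi
    have h1 := hz i
    rw [flat_const c v (i+1) (fun j _ => hall j)] at h1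
    have hnk : i < (i+1) * v.length := by
      have := Nat.le_mul_of_pos_right (i+1) hv0
      omega
    have h2 := h1 i (by rw [wpow_length]; exact hnk)
    rw [wpow_rev_getElem? v (i+1) i hnk] at h2
    rw [hsx i hi, ← h2, hxl i]
  · push_neg at hall
    have hex : ∃ m, c m = u := by
      obtain ⟨i, hi⟩ := hall
      exact ⟨i, (hc i).resolve_right hi⟩
    obtain ⟨m, hm, hmin⟩ : ∃ m, c m = u ∧ ∀ j, j < m → c j ≠ u :=
      ⟨Nat.find hex, Nat.find_spec hex, fun j hj => Nat.find_min hex hj⟩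
    have hlt : ∀ j, j < m → c j = v := fun j hj => (hc j).resolve_left (hmin j hj)
    have hW : LSuffix ((v ++ u) ++ wpow v m) z := by
      have h1 := hz (m+1)
      rw [flat_succ, flat_succ, flat_const c v m hlt, hm] at h1
      obtain ⟨t, ht⟩ : v <:+ c (m+1) := by
        rcases hc (m+1) with h | h
        · rw [h]; exact hsuf
        · rw [h]
      rw [← ht] at h1
      have heq : (t ++ v) ++ (u ++ wpow v m) = t ++ ((v ++ u) ++ wpow v m) := by
        simp [List.append_assoc]
      rw [heq] at h1
      exact lsuffix_of_append h1
    intro i hi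
    have hiW : i < ((v ++ u) ++ wpow v m).length := by
      simp [wpow_length]
      omega
    have hzi := hW i hiW
    rw [hsx i hi, ← hzi, List.reverse_append]
    by_cases hcase : i < m * v.length
    · rw [List.getElem?_append_left (by simpa [wpow_length] using hcase),
        wpow_rev_getElem? v m i hcase, hxl i]
    · push_neg at hcase
      have hrl : (wpow v m).reverse.length = m * v.length := by simp [wpow_length]
      rw [List.getElem?_append_right (by simpa [wpow_length] using hcase), hrl]
      have hjlt : i - m * v.length < v.length + u.length := by omega
      rw [hyvu (i - m * v.length) hjlt]
      have h3 : y (i - m * v.length) = x (i - m * v.length) :=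
        (agree (i - m * v.length) (by omega)).symm
      rw [h3]
      congr 1
      have h4 : i = (i - m * v.length) + m * v.length := by omega
      have h5 := x_mul m (i - m * v.length)
      rw [← h4] at h5
      exact h5
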